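/- For any w ∈ ℝ^n and the true revenue vector r = r̂ + Δ with Δ^T G^{-1} Δ = Γ², we have MSE(w, r) ≤ max(1, Γ²/Γ̂²) · WCMSE(w; Γ̂), where WCMSE(w; Γ̂) is the maximum of (b(w)^T(r'-r̂))² + Var(w, r') over all r' satisfying 0 ≤ r' ≤ p and (r'-r̂)^T G^{-1}(r'-r̂) ≤ Γ̂². -/

import Mathlib

open Matrix Finset

/-- `MSE(w, r) = (b(w)ᵀ(r - r̂))² + Var(w, r)` for `r ∈ ℝ^{2n}`. -/
noncomputable def mseFn (n : ℕ) (w : Fin n → ℝ) (p rhat : Fin (n + n) → ℝ)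
    (r : Fin (n + n) → ℝ) : ℝ :=
  (((1 : ℝ) / n) * ∑ i : Fin n, w i * (r (Fin.castAdd n i) - rhat (Fin.castAdd n i))
      - ((1 : ℝ) / n) * ∑ i : Fin n, (r (Fin.natAdd n i) - rhat (Fin.natAdd n i))) ^ 2
    + ((1 : ℝ) / (n : ℝ) ^ 2) * ∑ i : Fin n, (w i) ^ 2 * r (Fin.castAdd n i) *
        (p (Fin.castAdd n i) - r (Fin.castAdd n i))

/-- Per-coordinate scaling inequality for the variance term. -/
lemma key_ineq_aux (a c δ t : ℝ) (ha : 0 ≤ a) (hc : 0 ≤ c) (h1 : -a ≤ δ) (h2 : δ ≤ c)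
    (ht : 0 < t) (ht1 : t ≤ 1) :
    t ^ 2 * ((a + δ) * (c - δ)) ≤ (a + t * δ) * (c - t * δ) := by
  nlinarith [mul_nonneg (mul_nonneg ha hc) (sub_nonneg.2 ht1),
    mul_nonneg (mul_nonneg (sub_nonneg.2 h2) (by linarith : (0:ℝ) ≤ a + δ)) (sub_nonneg.2 ht1),
    mul_nonneg ht.le (sub_nonneg.2 ht1), sq_nonneg (δ*t), mul_pos ht ht]

/-- The scaling inequality `MSE(w, r̂+Δ) ≤ (1/t²) MSE(w, r̂ + tΔ)` for `0 < t ≤ 1`. -/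
lemma scale_lemma_aux (n : ℕ) (w : Fin n → ℝ) (p rhat Δ : Fin (n + n) → ℝ)
    (hrhat : ∀ i, 0 ≤ rhat i ∧ rhat i ≤ p i)
    (hr : ∀ i, 0 ≤ rhat i + Δ i ∧ rhat i + Δ i ≤ p i)
    (t : ℝ) (ht : 0 < t) (ht1 : t ≤ 1) :
    mseFn n w p rhat (fun i => rhat i + Δ i)
      ≤ (1 / t ^ 2) * mseFn n w p rhat (fun i => rhat i + t * Δ i) := by
  unfold mseFn
  simp only [add_sub_cancel_left]
  have ht2 : (0:ℝ) < t ^ 2 := by positivity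
  rw [mul_add]
  apply add_le_add
  · have h1 : ∑ i : Fin n, w i * (t * Δ (Fin.castAdd n i))
        = t * ∑ i : Fin n, w i * Δ (Fin.castAdd n i) := by
      rw [mul_sum]; exact sum_congr rfl fun i _ => by ring
    have h2 : ∑ i : Fin n, t * Δ (Fin.natAdd n i)
        = t * ∑ i : Fin n, Δ (Fin.natAdd n i) := by rw [mul_sum]
    rw [h1, h2]
    have : (1 / t ^ 2) *
        ((1:ℝ)/n * (t * ∑ i : Fin n, w i * Δ (Fin.castAdd n i))
          - (1:ℝ)/n * (t * ∑ i : Fin n, Δ (Fin.natAdd n i))) ^ 2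
        = ((1:ℝ)/n * ∑ i : Fin n, w i * Δ (Fin.castAdd n i)
          - (1:ℝ)/n * ∑ i : Fin n, Δ (Fin.natAdd n i)) ^ 2 := by
      field_simp
    rw [this]
  · have hsum : ∑ i : Fin n, w i ^ 2 * (rhat (Fin.castAdd n i) + Δ (Fin.castAdd n i)) *
        (p (Fin.castAdd n i) - (rhat (Fin.castAdd n i) + Δ (Fin.castAdd n i)))
        ≤ (1 / t ^ 2) * ∑ i : Fin n, w i ^ 2 *
            (rhat (Fin.castAdd n i) + t * Δ (Fin.castAdd n i)) *
            (p (Fin.castAdd n i) - (rhat (Fin.castAdd n i) + t * Δ (Fin.castAdd n i))) := by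
      rw [mul_sum]
      apply sum_le_sum
      intro i _
      set j := Fin.castAdd n i
      have key := key_ineq_aux (rhat j) (p j - rhat j) (Δ j) t (hrhat j).1
        (by linarith [(hrhat j).2]) (by linarith [(hr j).1]) (by linarith [(hr j).2]) ht ht1
      have key' := mul_le_mul_of_nonneg_left key (sq_nonneg (w i))
      rw [one_div, inv_mul_eq_div, le_div_iff₀ ht2]
      nlinarith [key']
    calc ((1:ℝ) / (n:ℝ) ^ 2) * ∑ i : Fin n, w i ^ 2 *
          (rhat (Fin.castAdd n i) + Δ (Fin.castAdd n i)) *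
          (p (Fin.castAdd n i) - (rhat (Fin.castAdd n i) + Δ (Fin.castAdd n i)))
        ≤ ((1:ℝ) / (n:ℝ) ^ 2) * ((1 / t ^ 2) * ∑ i : Fin n, w i ^ 2 *
            (rhat (Fin.castAdd n i) + t * Δ (Fin.castAdd n i)) *
            (p (Fin.castAdd n i) - (rhat (Fin.castAdd n i) + t * Δ (Fin.castAdd n i)))) :=
          mul_le_mul_of_nonneg_left hsum (by positivity)
      _ = (1 / t ^ 2) * ((1:ℝ) / (n:ℝ) ^ 2 * ∑ i : Fin n, w i ^ 2 *
            (rhat (Fin.castAdd n i) + t * Δ (Fin.castAdd n i)) *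
            (p (Fin.castAdd n i) - (rhat (Fin.castAdd n i) + t * Δ (Fin.castAdd n i)))) := by
          ring

/-- `MSE(w, r̂ + Δ) ≤ max(1, Γ²/Γ̂²) · WCMSE(w; Γ̂)` where `WCMSE` is the worst case of the
MSE over the box-and-ellipsoid feasible set of revenue vectors. -/
theorem stmt_9 (n : ℕ) (hn : 1 ≤ n)
    (p rhat Δ : Fin (n + n) → ℝ)
    (G : Matrix (Fin (n + n)) (Fin (n + n)) ℝ) (hG : G.PosDef)
    (hp : ∀ i, 0 ≤ p i) (hrhat : ∀ i, 0 ≤ rhat i ∧ rhat i ≤ p i)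
    (hr : ∀ i, 0 ≤ rhat i + Δ i ∧ rhat i + Δ i ≤ p i)
    (Γ Γhat : ℝ) (hΓ : 0 < Γ) (hΓhat : 0 < Γhat)
    (hΔ : Δ ⬝ᵥ (G⁻¹ *ᵥ Δ) = Γ ^ 2)
    (w : Fin n → ℝ) :
    mseFn n w p rhat (fun i => rhat i + Δ i)
      ≤ max 1 (Γ ^ 2 / Γhat ^ 2) *
          sSup (mseFn n w p rhat ''
            {r | (∀ i, 0 ≤ r i ∧ r i ≤ p i) ∧
              (r - rhat) ⬝ᵥ (G⁻¹ *ᵥ (r - rhat)) ≤ Γhat ^ 2}) := by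
  set S : Set (Fin (n+n) → ℝ) :=
    {r | (∀ i, 0 ≤ r i ∧ r i ≤ p i) ∧
      (r - rhat) ⬝ᵥ (G⁻¹ *ᵥ (r - rhat)) ≤ Γhat ^ 2} with hS
  -- boundedness of the image via compactness of the box
  have hcont : Continuous (mseFn n w p rhat) := by unfold mseFn; fun_prop
  have hsub : S ⊆ Set.Icc (0 : Fin (n+n) → ℝ) p := by
    intro r hrS
    exact ⟨fun i => (hrS.1 i).1, fun i => (hrS.1 i).2⟩
  have hbdd : BddAbove (mseFn n w p rhat '' S) :=
    ((isCompact_Icc.image hcont).bddAbove).mono (Set.image_mono hsub)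
  -- rhat is feasible and has nonnegative MSE, so the sSup is nonnegative
  have hrhatS : rhat ∈ S := by
    refine ⟨hrhat, ?_⟩
    have : rhat - rhat = (0 : Fin (n+n) → ℝ) := by simp
    rw [this]
    simp [zero_dotProduct]
    positivity
  have hmse0 : 0 ≤ mseFn n w p rhat rhat := by
    unfold mseFn
    apply add_nonneg
    · positivity
    · apply mul_nonneg (by positivity)
      apply sum_nonneg
      intro i _
      exact mul_nonneg (mul_nonneg (sq_nonneg _) (hrhat _).1)
        (by linarith [(hrhat (Fin.castAdd n i)).2])
  have hM0 : 0 ≤ sSup (mseFn n w p rhat '' S) :=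
    le_trans hmse0 (le_csSup hbdd (Set.mem_image_of_mem _ hrhatS))
  by_cases hcase : Γ ≤ Γhat
  · -- `r̂ + Δ` is itself feasible
    have hmem : (fun i => rhat i + Δ i) ∈ S := by
      refine ⟨hr, ?_⟩
      have h : (fun i => rhat i + Δ i) - rhat = Δ := by funext i; simp
      rw [h, hΔ]
      exact pow_le_pow_left₀ hΓ.le hcase 2
    calc mseFn n w p rhat (fun i => rhat i + Δ i)
        ≤ sSup (mseFn n w p rhat '' S) := le_csSup hbdd (Set.mem_image_of_mem _ hmem)
      _ ≤ max 1 (Γ ^ 2 / Γhat ^ 2) * sSup (mseFn n w p rhat '' S) :=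
          le_mul_of_one_le_left hM0 (le_max_left _ _)
  · push_neg at hcase
    set t : ℝ := Γhat / Γ with htdef
    have ht : 0 < t := div_pos hΓhat hΓ
    have ht1 : t ≤ 1 := by rw [htdef, div_le_one hΓ]; exact hcase.le
    -- `r̂ + tΔ` is feasible
    have hmem : (fun i => rhat i + t * Δ i) ∈ S := by
      constructor
      · intro i
        have h1 := (hrhat i).1
        have h2 := (hrhat i).2
        have h3 := (hr i).1
        have h4 := (hr i).2
        have e1 : 0 ≤ t * (rhat i + Δ i) := mul_nonneg ht.le h3
        have e2 : 0 ≤ (1 - t) * rhat i := mul_nonneg (by linarith) h1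
        have e3 : 0 ≤ t * (p i - rhat i - Δ i) := mul_nonneg ht.le (by linarith)
        have e4 : 0 ≤ (1 - t) * (p i - rhat i) := mul_nonneg (by linarith) (by linarith)
        constructor
        · show 0 ≤ rhat i + t * Δ i
          nlinarith
        · show rhat i + t * Δ i ≤ p i
          nlinarith
      · have h : (fun i => rhat i + t * Δ i) - rhat = t • Δ := by
          funext i; simp [mul_comm]
        rw [h, Matrix.mulVec_smul, smul_dotProduct, dotProduct_smul, hΔ]
        rw [smul_eq_mul, smul_eq_mul, htdef]
        apply le_of_eq
        field_simp
    have hteq : 1 / t ^ 2 = Γ ^ 2 / Γhat ^ 2 := by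
      rw [htdef, div_pow, one_div_div]
    calc mseFn n w p rhat (fun i => rhat i + Δ i)
        ≤ (1 / t ^ 2) * mseFn n w p rhat (fun i => rhat i + t * Δ i) :=
          scale_lemma_aux n w p rhat Δ hrhat hr t ht ht1
      _ ≤ (1 / t ^ 2) * sSup (mseFn n w p rhat '' S) :=
          mul_le_mul_of_nonneg_left (le_csSup hbdd (Set.mem_image_of_mem _ hmem))
            (by positivity)
      _ = (Γ ^ 2 / Γhat ^ 2) * sSup (mseFn n w p rhat '' S) := by rw [hteq]
      _ ≤ max 1 (Γ ^ 2 / Γhat ^ 2) * sSup (mseFn n w p rhat '' S) :=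
          mul_le_mul_of_nonneg_right (le_max_right _ _) hM0
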